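/- arXiv:1808.01498 — 2 statements merged into one kernel-verified Lean document; each statement's English description precedes it below -/
import Mathlib

section
/- Data-processed triangle inequality for the Hilbert α-divergence: let P : A → B be a positive, trace-preserving linear map on complex matrices (not necessarily completely positive), let ρ_A, σ_A be density matrices on A and ω_B a density matrix on B. Then for all α ≥ 1: H_α(P(ρ_A)‖ω_B) ≤ H_α(ρ_A‖σ_A) + H_α(P(σ_A)‖ω_B). -/
open scoped BigOperators ComplexOrder

noncomputable section

attribute [local instance] Classical.propDecidable

/-- A density matrix (quantum state): positive semidefinite with unit trace. -/
def IsDensity {ι : Type} [Fintype ι] (ρ : Matrix ι ι ℂ) : Prop :=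
  ρ.PosSemidef ∧ ρ.trace = 1

/-- The map `id_R ⊗ Φ` (for linear `Φ`), defined blockwise. -/
def idTensor {R ι κ : Type} (Φ : Matrix ι ι ℂ → Matrix κ κ ℂ)
    (X : Matrix (R × ι) (R × ι) ℂ) : Matrix (R × κ) (R × κ) ℂ :=
  fun p q => Φ (fun a b => X (p.1, a) (q.1, b)) p.2 q.2

/-- The map `Φ ⊗ id_E` (for linear `Φ`), defined blockwise. -/
def tensorId {ι κ E : Type} (Φ : Matrix ι ι ℂ → Matrix κ κ ℂ)
    (X : Matrix (ι × E) (ι × E) ℂ) : Matrix (κ × E) (κ × E) ℂ :=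
  fun p q => Φ (fun a b => X (a, p.2) (b, q.2)) p.1 q.1

/-- A quantum channel: linear, trace preserving, and completely positive. -/
structure IsChannel {ι κ : Type} [Fintype ι] [Fintype κ]
    (Φ : Matrix ι ι ℂ → Matrix κ κ ℂ) : Prop where
  linear : IsLinearMap ℂ Φ
  tracePres : ∀ X, (Φ X).trace = X.trace
  compPos : ∀ (k : ℕ) (X : Matrix (Fin k × ι) (Fin k × ι) ℂ),
      X.PosSemidef → (idTensor Φ X).PosSemidef

/-- A family of divergences, one for every finite dimension. -/
abbrev DivFam : Type 1 :=
  ∀ (ι : Type) [Fintype ι] [DecidableEq ι], Matrix ι ι ℂ → Matrix ι ι ℂ → EReal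

/-- Data processing: a generalized divergence does not increase under channels. -/
def DivDataProcessing (D : DivFam) : Prop :=
  ∀ (ι κ : Type) [Fintype ι] [DecidableEq ι] [Fintype κ] [DecidableEq κ]
    (Φ : Matrix ι ι ℂ → Matrix κ κ ℂ), IsChannel Φ →
    ∀ ρ σ : Matrix ι ι ℂ, IsDensity ρ → IsDensity σ →
      D κ (Φ ρ) (Φ σ) ≤ D ι ρ σ

/-- Faithfulness: `D(ρ‖ρ) ≤ 0` for every state `ρ`. -/
def DivFaithful (D : DivFam) : Prop :=
  ∀ (ι : Type) [Fintype ι] [DecidableEq ι] (ρ : Matrix ι ι ℂ),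
    IsDensity ρ → D ι ρ ρ ≤ 0

/-- Strong faithfulness: `D(ρ‖σ) = 0` iff `ρ = σ`. -/
def DivStronglyFaithful (D : DivFam) : Prop :=
  ∀ (ι : Type) [Fintype ι] [DecidableEq ι] (ρ σ : Matrix ι ι ℂ),
    IsDensity ρ → IsDensity σ → (D ι ρ σ = 0 ↔ ρ = σ)

/-- The generalized channel divergence `D(N‖M)`. -/
def channelDiv (D : DivFam) {ι κ : Type} [Fintype ι] [DecidableEq ι] [Fintype κ] [DecidableEq κ]
    (N M : Matrix ι ι ℂ → Matrix κ κ ℂ) : EReal :=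
  ⨆ (R : ℕ) (ρ : Matrix (Fin R × ι) (Fin R × ι) ℂ) (_ : IsDensity ρ),
    D (Fin R × κ) (idTensor N ρ) (idTensor M ρ)

/-- The amortized channel divergence `D^𝒜(N‖M)`. -/
def amortizedDiv (D : DivFam) {ι κ : Type} [Fintype ι] [DecidableEq ι] [Fintype κ] [DecidableEq κ]
    (N M : Matrix ι ι ℂ → Matrix κ κ ℂ) : EReal :=
  ⨆ (R : ℕ) (ρ : Matrix (Fin R × ι) (Fin R × ι) ℂ) (σ : Matrix (Fin R × ι) (Fin R × ι) ℂ)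
    (_ : IsDensity ρ) (_ : IsDensity σ),
      D (Fin R × κ) (idTensor N ρ) (idTensor M σ) - D (Fin R × ι) ρ σ

/-- Apply a real function to a Hermitian matrix via the spectral decomposition. -/
def hermFun {ι : Type} [Fintype ι] [DecidableEq ι] (f : ℝ → ℝ) (A : Matrix ι ι ℂ) :
    Matrix ι ι ℂ :=
  if hA : A.IsHermitian then
    (hA.eigenvectorUnitary : Matrix ι ι ℂ) *
      Matrix.diagonal (fun i => (f (hA.eigenvalues i) : ℂ)) *
      star (hA.eigenvectorUnitary : Matrix ι ι ℂ)
  else 0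

/-- Real matrix power via spectral calculus, with the generalized-inverse convention `0 ↦ 0`. -/
def matPow {ι : Type} [Fintype ι] [DecidableEq ι] (A : Matrix ι ι ℂ) (r : ℝ) : Matrix ι ι ℂ :=
  hermFun (fun x => if x = 0 then 0 else Real.rpow x r) A

/-- Matrix base-2 logarithm via spectral calculus, taken on the support. -/
def matLog2 {ι : Type} [Fintype ι] [DecidableEq ι] (A : Matrix ι ι ℂ) : Matrix ι ι ℂ :=
  hermFun (fun x => if x = 0 then 0 else Real.logb 2 x) A

/-- The projection onto the support of a Hermitian matrix. -/
def suppProj {ι : Type} [Fintype ι] [DecidableEq ι] (A : Matrix ι ι ℂ) : Matrix ι ι ℂ :=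
  hermFun (fun x => if x = 0 then 0 else 1) A

/-- `supp ρ ⊆ supp σ`, expressed (for Hermitian matrices) as kernel containment
`ker σ ⊆ ker ρ`. -/
def suppLE {ι : Type} [Fintype ι] (ρ σ : Matrix ι ι ℂ) : Prop :=
  ∀ v : ι → ℂ, σ.mulVec v = 0 → ρ.mulVec v = 0

/-- The quantum relative entropy `D(ρ‖σ) = Tr[ρ(log₂ρ − log₂σ)]`,
`+∞` if the support condition fails. -/
def relEnt {ι : Type} [Fintype ι] [DecidableEq ι] (ρ σ : Matrix ι ι ℂ) : EReal :=
  if suppLE ρ σ then (((ρ * (matLog2 ρ - matLog2 σ)).trace).re : EReal) else ⊤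

/-- `−log₂ x` as an extended real, with `−log₂ 0 = +∞`. -/
def negLog2 (x : ℝ) : EReal :=
  if x ≤ 0 then ⊤ else ((-Real.logb 2 x : ℝ) : EReal)

/-- The max-relative entropy `D_max(ρ‖σ) = inf{λ : ρ ≤ 2^λ σ}` (Loewner order). -/
def Dmax {ι : Type} [Fintype ι] (ρ σ : Matrix ι ι ℂ) : EReal :=
  ⨅ (l : ℝ) (_ : (((2 : ℝ) ^ l) • σ - ρ).PosSemidef), (l : EReal)

/-- The sandwiched Rényi divergence `D̃_α`. -/
def sandRenyi {ι : Type} [Fintype ι] [DecidableEq ι] (α : ℝ) (ρ σ : Matrix ι ι ℂ) : EReal :=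
  if α = 1 then relEnt ρ σ
  else if 1 < α ∧ ¬ suppLE ρ σ then ⊤
  else if α < 1 ∧ (ρ * σ).trace = 0 then ⊤
  else ((((α - 1)⁻¹ *
      Real.logb 2
        (((matPow (matPow σ ((1 - α) / (2 * α)) * ρ * matPow σ ((1 - α) / (2 * α))) α).trace).re)) :
        ℝ) : EReal)

/-- The Petz–Rényi divergence `D_α`. -/
def petzRenyi {ι : Type} [Fintype ι] [DecidableEq ι] (α : ℝ) (ρ σ : Matrix ι ι ℂ) : EReal :=
  if α = 0 then negLog2 (((suppProj ρ * σ).trace).re)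
  else if α = 1 then relEnt ρ σ
  else if 1 < α ∧ ¬ suppLE ρ σ then ⊤
  else if α < 1 ∧ (ρ * σ).trace = 0 then ⊤
  else ((((α - 1)⁻¹ * Real.logb 2 (((matPow ρ α * matPow σ (1 - α)).trace).re)) : ℝ) : EReal)

/-- The trace norm `‖X‖₁ = Tr √(XᴴX)`. -/
def traceNorm {ι : Type} [Fintype ι] [DecidableEq ι] (X : Matrix ι ι ℂ) : ℝ :=
  ((matPow (X.conjTranspose * X) (1/2 : ℝ)).trace).re

/-- The fidelity `F(ρ,σ) = ‖√ρ√σ‖₁²`. -/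
def matFidelity {ι : Type} [Fintype ι] [DecidableEq ι] (ρ σ : Matrix ι ι ℂ) : ℝ :=
  (traceNorm (matPow ρ (1/2 : ℝ) * matPow σ (1/2 : ℝ))) ^ 2

def relEntFam : DivFam := fun _ _ _ ρ σ => relEnt ρ σ
def DmaxFam : DivFam := fun _ _ _ ρ σ => Dmax ρ σ
def sandFam (α : ℝ) : DivFam := fun _ _ _ ρ σ => sandRenyi α ρ σ
def petzFam (α : ℝ) : DivFam := fun _ _ _ ρ σ => petzRenyi α ρ σ
/-- `D̃_{1/2}(ρ‖σ) = −log₂ F(ρ,σ)` as a divergence family. -/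
def fidDivFam : DivFam := fun _ _ _ ρ σ => negLog2 (matFidelity ρ σ)

/-- The classical-quantum state `Σ_x p(x) |x⟩⟨x| ⊗ ρ^x`. -/
def cqState {X ι : Type} [DecidableEq X] (p : X → ℝ) (ρ : X → Matrix ι ι ℂ) :
    Matrix (X × ι) (X × ι) ℂ :=
  fun a b => if a.1 = b.1 then (p a.1 : ℂ) * ρ a.1 a.2 b.2 else 0

/-- The direct-sum property of a generalized divergence on classical-quantum states. -/
def DivDirectSum (D : DivFam) : Prop :=
  ∀ (X ι : Type) [Fintype X] [DecidableEq X] [Fintype ι] [DecidableEq ι]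
    (p : X → ℝ), (∀ x, 0 ≤ p x) → (∑ x, p x = 1) →
    ∀ (ρ σ : X → Matrix ι ι ℂ), (∀ x, IsDensity (ρ x)) → (∀ x, IsDensity (σ x)) →
      D (X × ι) (cqState p ρ) (cqState p σ) = ∑ x, (p x : EReal) * D ι (ρ x) (σ x)

/-- The Kronecker (tensor) product of square matrices. -/
def mkron {ι E : Type} (A : Matrix ι ι ℂ) (B : Matrix E E ℂ) : Matrix (ι × E) (ι × E) ℂ :=
  fun p q => A p.1 q.1 * B p.2 q.2

/-- Sub-additivity of a divergence with respect to tensor-product states. -/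
def DivSubAdditive (D : DivFam) : Prop :=
  ∀ (ι E : Type) [Fintype ι] [DecidableEq ι] [Fintype E] [DecidableEq E]
    (ρ σ : Matrix ι ι ℂ) (ω τ : Matrix E E ℂ),
    IsDensity ρ → IsDensity σ → IsDensity ω → IsDensity τ →
      D (ι × E) (mkron ρ ω) (mkron σ τ) ≤ D ι ρ σ + D E ω τ

/-- The classical-quantum channel `ρ ↦ Σ_x ⟨x|ρ|x⟩ ν^x`. -/
def cqChannel {X κ : Type} [Fintype X] [Fintype κ] (ν : X → Matrix κ κ ℂ) :
    Matrix X X ℂ → Matrix κ κ ℂ :=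
  fun ρ => ∑ x, ρ x x • ν x

/-- The maximally entangled state of Schmidt rank `|ι|` on `ι × ι`. -/
def maxEnt (ι : Type) [Fintype ι] [DecidableEq ι] : Matrix (ι × ι) (ι × ι) ℂ :=
  fun p q => if p.1 = p.2 ∧ q.1 = q.2 then ((Fintype.card ι : ℂ))⁻¹ else 0

/-- An `(m+1)`-round adaptive channel discrimination protocol: registers `R_0, …, R_m`,
a shared initial state, adaptive channels between channel uses, and a final measurement. -/
structure Protocol (ι κ : Type) [Fintype ι] [DecidableEq ι] [Fintype κ] [DecidableEq κ]
    (m : ℕ) where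
  r : ℕ → ℕ
  init : Matrix (Fin (r 0) × ι) (Fin (r 0) × ι) ℂ
  init_density : IsDensity init
  adapt : ∀ i : ℕ, Matrix (Fin (r i) × κ) (Fin (r i) × κ) ℂ →
      Matrix (Fin (r (i + 1)) × ι) (Fin (r (i + 1)) × ι) ℂ
  adapt_channel : ∀ i, i < m → IsChannel (adapt i)
  meas : Matrix (Fin (r m) × κ) (Fin (r m) × κ) ℂ
  meas_psd : meas.PosSemidef
  meas_le_one : ((1 : Matrix (Fin (r m) × κ) (Fin (r m) × κ) ℂ) - meas).PosSemidef

namespace Protocol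

variable {ι κ : Type} [Fintype ι] [DecidableEq ι] [Fintype κ] [DecidableEq κ] {m : ℕ}

/-- The state on `R_i ⊗ A` just before the `(i+1)`-st channel use, when the channel is `Ch`. -/
def evolve (P : Protocol ι κ m) (Ch : Matrix ι ι ℂ → Matrix κ κ ℂ) :
    (i : ℕ) → Matrix (Fin (P.r i) × ι) (Fin (P.r i) × ι) ℂ
  | 0 => P.init
  | (i + 1) => P.adapt i (idTensor Ch (P.evolve Ch i))

/-- The final state on `R_m ⊗ B` after all `m + 1` channel uses. -/
def final (P : Protocol ι κ m) (Ch : Matrix ι ι ℂ → Matrix κ κ ℂ) :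
    Matrix (Fin (P.r m) × κ) (Fin (P.r m) × κ) ℂ :=
  idTensor Ch (P.evolve Ch m)

/-- The probability of accepting (deciding for the null hypothesis). -/
def acceptProb (P : Protocol ι κ m) (Ch : Matrix ι ι ℂ → Matrix κ κ ℂ) : ℝ :=
  ((P.meas * P.final Ch).trace).re

/-- The type I error probability `Tr[(I − Q) ρ'⁽ⁿ⁾]`. -/
def typeI (P : Protocol ι κ m) (N : Matrix ι ι ℂ → Matrix κ κ ℂ) : ℝ :=
  ((((1 : Matrix (Fin (P.r m) × κ) (Fin (P.r m) × κ) ℂ) - P.meas) * P.final N).trace).re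

/-- The type II error probability `Tr[Q τ'⁽ⁿ⁾]`. -/
def typeII (P : Protocol ι κ m) (M : Matrix ι ι ℂ → Matrix κ κ ℂ) : ℝ :=
  ((P.meas * P.final M).trace).re

end Protocol

/-- The binary (classical) state `diag(p, 1−p)`. -/
def binState (p : ℝ) : Matrix (Fin 2) (Fin 2) ℂ :=
  Matrix.diagonal (fun i => if i = 0 then (p : ℂ) else ((1 - p : ℝ) : ℂ))

/-- The binary entropy `h₂(ε)`. -/
def h2 (ε : ℝ) : ℝ := -(ε * Real.logb 2 ε) - (1 - ε) * Real.logb 2 (1 - ε)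

/-- `ζ_n(ε, N, M)` with `n = m + 1`: the optimal type II error exponent among all
`(m+1)`-round adaptive protocols with type I error at most `ε`. -/
def steinExp {ι κ : Type} [Fintype ι] [DecidableEq ι] [Fintype κ] [DecidableEq κ]
    (N M : Matrix ι ι ℂ → Matrix κ κ ℂ) (m : ℕ) (ε : ℝ) : EReal :=
  ⨆ (P : Protocol ι κ m) (_ : P.typeI N ≤ ε),
    (((m + 1 : ℝ))⁻¹ : EReal) * negLog2 (P.typeII M)

/-- Partial trace over the (left) reference system. -/
def ptraceLeft {R ι : Type} [Fintype R] (ψ : Matrix (R × ι) (R × ι) ℂ) : Matrix ι ι ℂ :=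
  fun a b => ∑ r, ψ (r, a) (r, b)

/-- The energy-constrained generalized channel divergence. -/
def eChannelDiv (D : DivFam) {ι κ : Type} [Fintype ι] [DecidableEq ι] [Fintype κ] [DecidableEq κ]
    (H : Matrix ι ι ℂ) (E : ℝ) (N M : Matrix ι ι ℂ → Matrix κ κ ℂ) : EReal :=
  ⨆ (R : ℕ) (ψ : Matrix (Fin R × ι) (Fin R × ι) ℂ) (_ : IsDensity ψ)
    (_ : ((H * ptraceLeft ψ).trace).re ≤ E),
      D (Fin R × κ) (idTensor N ψ) (idTensor M ψ)

/-- The energy-constrained amortized channel divergence. -/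
def eAmortizedDiv (D : DivFam) {ι κ : Type} [Fintype ι] [DecidableEq ι] [Fintype κ] [DecidableEq κ]
    (H : Matrix ι ι ℂ) (E : ℝ) (N M : Matrix ι ι ℂ → Matrix κ κ ℂ) : EReal :=
  ⨆ (R : ℕ) (ρ : Matrix (Fin R × ι) (Fin R × ι) ℂ) (σ : Matrix (Fin R × ι) (Fin R × ι) ℂ)
    (_ : IsDensity ρ) (_ : IsDensity σ)
    (_ : ((H * ptraceLeft ρ).trace).re ≤ E) (_ : ((H * ptraceLeft σ).trace).re ≤ E),
      D (Fin R × κ) (idTensor N ρ) (idTensor M σ) - D (Fin R × ι) ρ σ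

/-- `sup_α(ρ/σ)`: supremum of `Tr[Λρ]/Tr[Λσ]` over Hermitian `Λ` with `α⁻¹ I ≤ Λ ≤ I`. -/
def hilbertSup {ι : Type} [Fintype ι] [DecidableEq ι] (α : ℝ) (ρ σ : Matrix ι ι ℂ) : ℝ :=
  sSup { t : ℝ | ∃ Λ : Matrix ι ι ℂ, Λ.IsHermitian ∧
    (Λ - (α⁻¹ : ℝ) • (1 : Matrix ι ι ℂ)).PosSemidef ∧
    ((1 : Matrix ι ι ℂ) - Λ).PosSemidef ∧
    t = ((Λ * ρ).trace).re / ((Λ * σ).trace).re }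

/-- The Hilbert `α`-divergence `H_α(ρ‖σ)`, with `H₁(ρ‖σ) = ‖ρ−σ‖₁ / (2 ln 2)`. -/
def hilbertDiv {ι : Type} [Fintype ι] [DecidableEq ι] (α : ℝ) (ρ σ : Matrix ι ι ℂ) : ℝ :=
  if α = 1 then (2 * Real.log 2)⁻¹ * traceNorm (ρ - σ)
  else (α / (α - 1)) * Real.logb 2 (hilbertSup α ρ σ)


section HilbertAux

open Matrix

variable {n : Type} [Fintype n] [DecidableEq n]

private lemma psd_diag_re_nonneg {M : Matrix n n ℂ} (hM : M.PosSemidef) (i : n) :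
    0 ≤ (M i i).re := by
  have h := hM.re_dotProduct_nonneg (Pi.single i 1)
  simpa [dotProduct, Matrix.mulVec, Pi.single_apply, Finset.mul_sum, mul_comm] using h

private lemma psd_trace_re_nonneg {M : Matrix n n ℂ} (hM : M.PosSemidef) :
    0 ≤ (M.trace).re := by
  have : (M.trace).re = ∑ i, (M i i).re := by
    simp [Matrix.trace, Matrix.diag, Complex.re_sum]
  rw [this]
  exact Finset.sum_nonneg fun i _ => psd_diag_re_nonneg hM i

private lemma trace_mul_herm_real {A B : Matrix n n ℂ} (hA : A.IsHermitian)
    (hB : B.IsHermitian) : ((A * B).trace).im = 0 := by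
  have h : star ((A * B).trace) = (A * B).trace := by
    rw [← Matrix.trace_conjTranspose, Matrix.conjTranspose_mul, hA.eq, hB.eq,
      Matrix.trace_mul_comm]
  have := congrArg Complex.im h
  simp only [Complex.star_def, Complex.conj_im] at this
  linarith

private lemma psd_mul_trace_nonneg {A B : Matrix n n ℂ} (hA : A.PosSemidef)
    (hB : B.PosSemidef) : 0 ≤ ((A * B).trace).re := by
  obtain ⟨C, hC⟩ : ∃ C : Matrix n n ℂ, A = star C * C := by
    open scoped MatrixOrder in exact CStarAlgebra.nonneg_iff_eq_star_mul_self.mp hA.nonneg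
  have h2 : (A * B).trace = (C * B * Cᴴ).trace := by
    rw [hC, Matrix.star_eq_conjTranspose, Matrix.mul_assoc, Matrix.trace_mul_comm]
  have h3 : (C * B * Cᴴ).PosSemidef := hB.mul_mul_conjTranspose_same C
  rw [h2]
  exact psd_trace_re_nonneg h3

private lemma psd_mul_trace_nonneg' {A B : Matrix n n ℂ} (hA : A.PosSemidef)
    (hB : B.PosSemidef) : 0 ≤ (A * B).trace := by
  rw [Complex.nonneg_iff]
  exact ⟨psd_mul_trace_nonneg hA hB, (trace_mul_herm_real hA.1 hB.1).symm⟩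

/-! ### hermFun calculus -/

private lemma hermFun_eq {A : Matrix n n ℂ} (hA : A.IsHermitian) (f : ℝ → ℝ) :
    hermFun f A = (hA.eigenvectorUnitary : Matrix n n ℂ) *
      Matrix.diagonal (fun i => (f (hA.eigenvalues i) : ℂ)) *
      star (hA.eigenvectorUnitary : Matrix n n ℂ) := by
  rw [hermFun, dif_pos hA]

private lemma star_mul_self_eigenvectorUnitary {A : Matrix n n ℂ} (hA : A.IsHermitian) :
    star (hA.eigenvectorUnitary : Matrix n n ℂ) * (hA.eigenvectorUnitary : Matrix n n ℂ) = 1 :=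
  (Matrix.mem_unitaryGroup_iff').mp hA.eigenvectorUnitary.2

private lemma mul_star_self_eigenvectorUnitary {A : Matrix n n ℂ} (hA : A.IsHermitian) :
    (hA.eigenvectorUnitary : Matrix n n ℂ) * star (hA.eigenvectorUnitary : Matrix n n ℂ) = 1 :=
  (Matrix.mem_unitaryGroup_iff).mp hA.eigenvectorUnitary.2

private lemma hermFun_mul {A : Matrix n n ℂ} (hA : A.IsHermitian) (f g : ℝ → ℝ) :
    hermFun f A * hermFun g A = hermFun (fun x => f x * g x) A := by
  rw [hermFun_eq hA, hermFun_eq hA, hermFun_eq hA]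
  set U := (hA.eigenvectorUnitary : Matrix n n ℂ) with hU
  set Df := Matrix.diagonal (fun i => (f (hA.eigenvalues i) : ℂ))
  set Dg := Matrix.diagonal (fun i => (g (hA.eigenvalues i) : ℂ))
  have h : star U * U = 1 := star_mul_self_eigenvectorUnitary hA
  calc U * Df * star U * (U * Dg * star U)
      = U * (Df * ((star U * U) * (Dg * star U))) := by
        simp only [Matrix.mul_assoc]
    _ = U * (Df * Dg) * star U := by
        rw [h, Matrix.one_mul]; simp only [Matrix.mul_assoc]
    _ = U * Matrix.diagonal (fun i => ((f (hA.eigenvalues i) * g (hA.eigenvalues i) : ℝ) : ℂ)) *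
          star U := by
        rw [Matrix.diagonal_mul_diagonal]
        congr 2
        funext i
        push_cast
        rfl

private lemma hermFun_add {A : Matrix n n ℂ} (hA : A.IsHermitian) (f g : ℝ → ℝ) :
    hermFun f A + hermFun g A = hermFun (fun x => f x + g x) A := by
  rw [hermFun_eq hA, hermFun_eq hA, hermFun_eq hA]
  rw [← Matrix.add_mul, ← Matrix.mul_add, Matrix.diagonal_add]
  congr 2
  funext i
  push_cast
  rfl

private lemma hermFun_congr {A : Matrix n n ℂ} (hA : A.IsHermitian) {f g : ℝ → ℝ}
    (h : ∀ i, f (hA.eigenvalues i) = g (hA.eigenvalues i)) :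
    hermFun f A = hermFun g A := by
  have e : (fun i => ((f (hA.eigenvalues i) : ℝ) : ℂ)) =
      fun i => ((g (hA.eigenvalues i) : ℝ) : ℂ) := funext fun i => by rw [h i]
  rw [hermFun_eq hA, hermFun_eq hA, e]

private lemma hermFun_id {A : Matrix n n ℂ} (hA : A.IsHermitian) :
    hermFun (fun x => x) A = A := by
  rw [hermFun_eq hA]
  exact hA.spectral_theorem.symm

private lemma hermFun_one {A : Matrix n n ℂ} (hA : A.IsHermitian) :
    hermFun (fun _ => (1 : ℝ)) A = 1 := by
  rw [hermFun_eq hA]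
  have : Matrix.diagonal (fun _ : n => ((1 : ℝ) : ℂ)) = 1 := by
    have e : (fun _ : n => ((1 : ℝ) : ℂ)) = fun _ => (1 : ℂ) := by funext; norm_num
    rw [e, Matrix.diagonal_one]
  rw [this, Matrix.mul_one, mul_star_self_eigenvectorUnitary hA]

private lemma hermFun_posSemidef {A : Matrix n n ℂ} (hA : A.IsHermitian) {f : ℝ → ℝ}
    (hf : ∀ i, 0 ≤ f (hA.eigenvalues i)) : (hermFun f A).PosSemidef := by
  rw [hermFun_eq hA]
  have hd : (Matrix.diagonal (fun i => (f (hA.eigenvalues i) : ℂ))).PosSemidef := by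
    refine Matrix.PosSemidef.diagonal fun i => ?_
    exact Complex.zero_le_real.mpr (hf i)
  have := hd.mul_mul_conjTranspose_same (hA.eigenvectorUnitary : Matrix n n ℂ)
  rwa [← Matrix.star_eq_conjTranspose] at this

private lemma hermFun_trace {A : Matrix n n ℂ} (hA : A.IsHermitian) (f : ℝ → ℝ) :
    (hermFun f A).trace = ∑ i, (f (hA.eigenvalues i) : ℂ) := by
  rw [hermFun_eq hA, Matrix.trace_mul_cycle, star_mul_self_eigenvectorUnitary hA,
    Matrix.one_mul, Matrix.trace_diagonal]

private lemma hermFun_sub {A : Matrix n n ℂ} (hA : A.IsHermitian) (f g : ℝ → ℝ) :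
    hermFun f A - hermFun g A = hermFun (fun x => f x - g x) A := by
  have h := hermFun_add hA (fun x => f x - g x) g
  simp only [sub_add_cancel] at h
  rw [← h]
  abel

/-! ### positive and negative parts -/

private lemma posPart_psd {A : Matrix n n ℂ} (hA : A.IsHermitian) :
    (hermFun (fun x => max x 0) A).PosSemidef :=
  hermFun_posSemidef hA fun i => le_max_right _ _

private lemma negPart_psd {A : Matrix n n ℂ} (hA : A.IsHermitian) :
    (hermFun (fun x => max (-x) 0) A).PosSemidef :=
  hermFun_posSemidef hA fun i => le_max_right _ _

private lemma hermFun_posPart_sub_negPart {A : Matrix n n ℂ} (hA : A.IsHermitian) :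
    hermFun (fun x => max x 0) A - hermFun (fun x => max (-x) 0) A = A := by
  rw [hermFun_sub hA]
  have : (fun x => max x 0 - max (-x) 0) = fun x : ℝ => x := by
    funext x
    rcases le_total x 0 with h | h
    · rw [max_eq_right h, max_eq_left (by linarith)]; ring
    · rw [max_eq_left h, max_eq_right (by linarith)]; ring
  rw [this, hermFun_id hA]

private lemma abs_eq_posPart_add_negPart {A : Matrix n n ℂ} (hA : A.IsHermitian) :
    hermFun (fun x => |x|) A = hermFun (fun x => max x 0) A + hermFun (fun x => max (-x) 0) A := by
  rw [hermFun_add hA]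
  apply hermFun_congr hA
  intro i
  rcases le_total (hA.eigenvalues i) 0 with h | h
  · rw [abs_of_nonpos h, max_eq_right h, max_eq_left (by linarith)]; ring
  · rw [abs_of_nonneg h, max_eq_left h, max_eq_right (by linarith)]; ring

/-! ### trace norm of a Hermitian matrix -/

private lemma traceNorm_herm {X : Matrix n n ℂ} (hX : X.IsHermitian) :
    traceNorm X = ((hermFun (fun x => |x|) X).trace).re := by
  have hB : (Xᴴ * X).PosSemidef := Matrix.posSemidef_conjTranspose_mul_self X
  have hBH : (Xᴴ * X).IsHermitian := hB.1
  -- the abs functional calculus of X is a psd square root of XᴴX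
  have hS : (hermFun (fun x => |x|) X).PosSemidef := hermFun_posSemidef hX fun i => abs_nonneg _
  have hSsq : (hermFun (fun x => |x|) X) ^ 2 = Xᴴ * X := by
    rw [pow_two, hermFun_mul hX]
    have h1 : (fun x : ℝ => |x| * |x|) = fun x : ℝ => x * x := by
      funext x; exact abs_mul_abs_self x
    rw [h1, ← hermFun_mul hX (fun x => x) (fun x => x), hermFun_id hX, hX.eq]
  -- matPow (XᴴX) (1/2) is also a psd square root of XᴴX
  have hT : (matPow (Xᴴ * X) (1/2 : ℝ)).PosSemidef := by
    apply hermFun_posSemidef hBH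
    intro i
    by_cases h : hBH.eigenvalues i = 0
    · simp [h]
    · simp only [h, if_false]
      exact Real.rpow_nonneg (hB.eigenvalues_nonneg i) _
  have hTsq : (matPow (Xᴴ * X) (1/2 : ℝ)) ^ 2 = Xᴴ * X := by
    rw [pow_two, matPow, hermFun_mul hBH]
    have : hermFun (fun x => (if x = 0 then 0 else Real.rpow x (1/2)) *
        (if x = 0 then 0 else Real.rpow x (1/2))) (Xᴴ * X) = hermFun (fun x => x) (Xᴴ * X) := by
      apply hermFun_congr hBH
      intro i
      by_cases h : hBH.eigenvalues i = 0
      · simp [h]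
      · simp only [h, if_false]
        have hx : 0 < hBH.eigenvalues i :=
          lt_of_le_of_ne (hB.eigenvalues_nonneg i) (Ne.symm h)
        rw [show Real.rpow (hBH.eigenvalues i) (1/2) = hBH.eigenvalues i ^ (1/2 : ℝ) from rfl,
          ← Real.rpow_add hx, show (1/2 : ℝ) + 1/2 = 1 by norm_num, Real.rpow_one]
    rw [this, hermFun_id hBH]
  have hTS : matPow (Xᴴ * X) (1/2 : ℝ) = hermFun (fun x => |x|) X := by
    open scoped MatrixOrder in
    exact ((CFC.sqrt_eq_iff _ _ hB.nonneg hT.nonneg).mpr (by rw [← pow_two]; exact hTsq)).symm.trans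
      ((CFC.sqrt_eq_iff _ _ hB.nonneg hS.nonneg).mpr (by rw [← pow_two]; exact hSsq))
  rw [traceNorm, hTS]

private lemma traceNorm_herm_eq {X : Matrix n n ℂ} (hX : X.IsHermitian) :
    traceNorm X = ((hermFun (fun x => max x 0) X).trace).re +
      ((hermFun (fun x => max (-x) 0) X).trace).re := by
  rw [traceNorm_herm hX, abs_eq_posPart_add_negPart hX, Matrix.trace_add, Complex.add_re]

/-- upper bound : `Re Tr[Λ X] ≤ ‖X‖₁` for `-1 ≤ Λ ≤ 1`. -/
private lemma trace_le_traceNorm {X Λ : Matrix n n ℂ} (hX : X.IsHermitian)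
    (h1 : ((1 : Matrix n n ℂ) - Λ).PosSemidef) (h2 : ((1 : Matrix n n ℂ) + Λ).PosSemidef) :
    ((Λ * X).trace).re ≤ traceNorm X := by
  set Xp := hermFun (fun x => max x 0) X with hXp
  set Xm := hermFun (fun x => max (-x) 0) X with hXm
  have hp : Xp.PosSemidef := posPart_psd hX
  have hm : Xm.PosSemidef := negPart_psd hX
  have hsplit : X = Xp - Xm := (hermFun_posPart_sub_negPart hX).symm
  have e1 : 0 ≤ (((1 : Matrix n n ℂ) - Λ) * Xp).trace.re := psd_mul_trace_nonneg h1 hp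
  have e2 : 0 ≤ (((1 : Matrix n n ℂ) + Λ) * Xm).trace.re := psd_mul_trace_nonneg h2 hm
  have f1 : (((1 : Matrix n n ℂ) - Λ) * Xp).trace.re = Xp.trace.re - ((Λ * Xp).trace).re := by
    rw [Matrix.sub_mul, Matrix.one_mul, Matrix.trace_sub, Complex.sub_re]
  have f2 : (((1 : Matrix n n ℂ) + Λ) * Xm).trace.re = Xm.trace.re + ((Λ * Xm).trace).re := by
    rw [Matrix.add_mul, Matrix.one_mul, Matrix.trace_add, Complex.add_re]
  have key : ((Λ * X).trace).re = ((Λ * Xp).trace).re - ((Λ * Xm).trace).re := by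
    rw [hsplit, Matrix.mul_sub, Matrix.trace_sub, Complex.sub_re]
  rw [key, traceNorm_herm_eq hX, ← hXp, ← hXm]
  rw [f1] at e1; rw [f2] at e2
  linarith

/-- achievability : the trace norm of a Hermitian matrix is attained. -/
private lemma exists_opt {X : Matrix n n ℂ} (hX : X.IsHermitian) :
    ∃ Λ : Matrix n n ℂ, ((1 : Matrix n n ℂ) - Λ).PosSemidef ∧
      ((1 : Matrix n n ℂ) + Λ).PosSemidef ∧ ((Λ * X).trace).re = traceNorm X := by
  refine ⟨hermFun (fun x => if x ≤ 0 then (-1 : ℝ) else 1) X, ?_, ?_, ?_⟩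
  · rw [← hermFun_one hX, hermFun_sub hX]
    apply hermFun_posSemidef hX
    intro i
    by_cases h : hX.eigenvalues i ≤ 0 <;> simp [h]
  · rw [← hermFun_one hX, hermFun_add hX]
    apply hermFun_posSemidef hX
    intro i
    by_cases h : hX.eigenvalues i ≤ 0 <;> simp [h]
  · have h0 := hermFun_mul hX (fun x => if x ≤ 0 then (-1 : ℝ) else 1) (fun x => x)
    rw [hermFun_id hX] at h0
    have h1 : hermFun (fun x => (if x ≤ 0 then (-1 : ℝ) else 1) * x) X
        = hermFun (fun x => |x|) X := by
      apply hermFun_congr hX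
      intro i
      by_cases h : hX.eigenvalues i ≤ 0
      · simp [h, abs_of_nonpos h]
      · simp [h, abs_of_nonneg (le_of_not_ge h)]
    rw [h0, h1, traceNorm_herm hX]

private lemma traceNorm_triangle_herm {A B : Matrix n n ℂ} (hA : A.IsHermitian)
    (hB : B.IsHermitian) : traceNorm (A + B) ≤ traceNorm A + traceNorm B := by
  obtain ⟨Λ, h1, h2, hopt⟩ := exists_opt (hA.add hB)
  rw [← hopt, Matrix.mul_add, Matrix.trace_add, Complex.add_re]
  exact add_le_add (trace_le_traceNorm hA h1 h2) (trace_le_traceNorm hB h1 h2)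

end HilbertAux

section AdjointAux

open Matrix

variable {ι κ : Type} [Fintype ι] [DecidableEq ι] [Fintype κ] [DecidableEq κ]
variable (P : Matrix ι ι ℂ → Matrix κ κ ℂ)

/-- The adjoint of `P` with respect to the trace inner product. -/
private def adjMap (Λ : Matrix κ κ ℂ) : Matrix ι ι ℂ :=
  fun i j => (Λ * P (Matrix.single j i 1)).trace

variable {P}

private lemma P_map_sum {β : Type} (hlin : IsLinearMap ℂ P) (s : Finset β)
    (f : β → Matrix ι ι ℂ) : P (∑ x ∈ s, f x) = ∑ x ∈ s, P (f x) := by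
  classical
  induction s using Finset.induction with
  | empty => simpa using hlin.map_zero
  | insert _ _ h ih => rw [Finset.sum_insert h, Finset.sum_insert h, hlin.map_add, ih]

private lemma adj_spec (hlin : IsLinearMap ℂ P) (Λ : Matrix κ κ ℂ) (X : Matrix ι ι ℂ) :
    ((adjMap P Λ) * X).trace = (Λ * P X).trace := by
  have expand : P X = ∑ a, ∑ b, X a b • P (Matrix.single a b 1) := by
    conv_lhs => rw [Matrix.matrix_eq_sum_single X]
    rw [P_map_sum hlin]
    refine Finset.sum_congr rfl fun a _ => ?_
    rw [P_map_sum hlin]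
    refine Finset.sum_congr rfl fun b _ => ?_
    rw [show Matrix.single a b (X a b) = X a b • Matrix.single a b 1 by
      rw [smul_single, smul_eq_mul, mul_one], hlin.map_smul]
  calc ((adjMap P Λ) * X).trace
      = ∑ i, ∑ j, adjMap P Λ i j * X j i := by
        simp [Matrix.trace, Matrix.diag, Matrix.mul_apply]
    _ = ∑ a, ∑ b, X a b * (Λ * P (Matrix.single a b 1)).trace := by
        rw [Finset.sum_comm]
        refine Finset.sum_congr rfl fun a _ => Finset.sum_congr rfl fun b _ => ?_
        rw [adjMap, mul_comm]
    _ = (Λ * P X).trace := by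
        rw [expand, Matrix.mul_sum, Matrix.trace_sum]
        refine (Finset.sum_congr rfl fun a _ => ?_).symm
        rw [Matrix.mul_sum, Matrix.trace_sum]
        refine Finset.sum_congr rfl fun b _ => ?_
        rw [Matrix.mul_smul, Matrix.trace_smul, smul_eq_mul]

private lemma adj_one (htr : ∀ X : Matrix ι ι ℂ, (P X).trace = X.trace) :
    adjMap P (1 : Matrix κ κ ℂ) = 1 := by
  funext i j
  rw [adjMap, Matrix.one_mul, htr]
  by_cases h : i = j
  · subst h
    rw [Matrix.one_apply_eq, Matrix.trace_single_eq_same]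
  · rw [Matrix.one_apply_ne h]
    have hz : ∀ x : ι, Matrix.single j i (1 : ℂ) x x = 0 := by
      intro x
      apply Matrix.single_apply_of_ne
      rintro ⟨rfl, rfl⟩
      exact h rfl
    simp [Matrix.trace, Matrix.diag, hz]

private lemma adj_sub (Λ₁ Λ₂ : Matrix κ κ ℂ) :
    adjMap P (Λ₁ - Λ₂) = adjMap P Λ₁ - adjMap P Λ₂ := by
  funext i j
  simp [adjMap, Matrix.sub_mul, Matrix.trace_sub]

private lemma adj_add (Λ₁ Λ₂ : Matrix κ κ ℂ) :
    adjMap P (Λ₁ + Λ₂) = adjMap P Λ₁ + adjMap P Λ₂ := by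
  funext i j
  simp [adjMap, Matrix.add_mul, Matrix.trace_add]

private lemma adj_real_smul (r : ℝ) (Λ : Matrix κ κ ℂ) :
    adjMap P (r • Λ) = r • adjMap P Λ := by
  funext i j
  simp [adjMap, Matrix.smul_mul, Matrix.trace_smul]

/-- A positive linear map sends Hermitian matrices to Hermitian matrices. -/
private lemma P_herm (hlin : IsLinearMap ℂ P)
    (hpos : ∀ X : Matrix ι ι ℂ, X.PosSemidef → (P X).PosSemidef)
    {X : Matrix ι ι ℂ} (hX : X.IsHermitian) : (P X).IsHermitian := by
  have hsplit : X = hermFun (fun x => max x 0) X - hermFun (fun x => max (-x) 0) X :=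
    (hermFun_posPart_sub_negPart hX).symm
  rw [hsplit, hlin.map_sub]
  exact ((hpos _ (posPart_psd hX)).1).sub ((hpos _ (negPart_psd hX)).1)

/-- A positive linear map commutes with conjugate transpose. -/
private lemma P_conjT (hlin : IsLinearMap ℂ P)
    (hpos : ∀ X : Matrix ι ι ℂ, X.PosSemidef → (P X).PosSemidef)
    (X : Matrix ι ι ℂ) : P Xᴴ = (P X)ᴴ := by
  have hA : (X + Xᴴ).IsHermitian := by
    rw [Matrix.IsHermitian, Matrix.conjTranspose_add, Matrix.conjTranspose_conjTranspose,
      add_comm]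
  have hB : (Complex.I • (X - Xᴴ)).IsHermitian := by
    rw [Matrix.IsHermitian, Matrix.conjTranspose_smul, Matrix.conjTranspose_sub,
      Matrix.conjTranspose_conjTranspose, Complex.star_def, Complex.conj_I, neg_smul,
      ← smul_neg, neg_sub]
  have hPA := P_herm hlin hpos hA
  have hPB := P_herm hlin hpos hB
  have hstar1 : star (2⁻¹ : ℂ) = 2⁻¹ := by
    simp [Complex.star_def, Complex.ext_iff]
  have hstar2 : star (-(2⁻¹) * Complex.I) = (2⁻¹ : ℂ) * Complex.I := by
    simp [Complex.star_def, Complex.ext_iff]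
  have hX : X = (2⁻¹ : ℂ) • (X + Xᴴ) + (-(2⁻¹) * Complex.I) • (Complex.I • (X - Xᴴ)) := by
    rw [smul_smul, mul_assoc, Complex.I_mul_I, mul_neg_one, neg_neg]
    module
  have hXH : Xᴴ = (2⁻¹ : ℂ) • (X + Xᴴ) + ((2⁻¹ : ℂ) * Complex.I) • (Complex.I • (X - Xᴴ)) := by
    rw [smul_smul, mul_assoc, Complex.I_mul_I, mul_neg_one]
    module
  calc P Xᴴ
      = P ((2⁻¹ : ℂ) • (X + Xᴴ) + ((2⁻¹ : ℂ) * Complex.I) • (Complex.I • (X - Xᴴ))) := by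
        rw [← hXH]
    _ = (2⁻¹ : ℂ) • P (X + Xᴴ) +
          ((2⁻¹ : ℂ) * Complex.I) • P (Complex.I • (X - Xᴴ)) := by
        rw [hlin.map_add, hlin.map_smul, hlin.map_smul]
    _ = (P X)ᴴ := by
        have e : (P X)ᴴ = ((2⁻¹ : ℂ) • P (X + Xᴴ) +
            ((-(2⁻¹) * Complex.I)) • P (Complex.I • (X - Xᴴ)))ᴴ := by
          conv_lhs => rw [hX, hlin.map_add, hlin.map_smul, hlin.map_smul]
        rw [e, Matrix.conjTranspose_add, Matrix.conjTranspose_smul, Matrix.conjTranspose_smul,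
          hPA.eq, hPB.eq, hstar1, hstar2]

private lemma adj_herm (hlin : IsLinearMap ℂ P)
    (hpos : ∀ X : Matrix ι ι ℂ, X.PosSemidef → (P X).PosSemidef)
    {Λ : Matrix κ κ ℂ} (hΛ : Λ.IsHermitian) : (adjMap P Λ).IsHermitian := by
  unfold Matrix.IsHermitian
  funext i j
  rw [Matrix.conjTranspose_apply, adjMap, adjMap]
  rw [← Matrix.trace_conjTranspose, Matrix.conjTranspose_mul, hΛ.eq]
  rw [← P_conjT hlin hpos]
  have : (Matrix.single i j (1 : ℂ))ᴴ = Matrix.single j i 1 := by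
    funext a b
    simp [Matrix.conjTranspose_apply, Matrix.single, and_comm]
  rw [this, Matrix.trace_mul_comm]

private lemma adj_psd (hlin : IsLinearMap ℂ P)
    (hpos : ∀ X : Matrix ι ι ℂ, X.PosSemidef → (P X).PosSemidef)
    {Λ : Matrix κ κ ℂ} (hΛ : Λ.PosSemidef) : (adjMap P Λ).PosSemidef := by
  refine Matrix.PosSemidef.of_dotProduct_mulVec_nonneg (adj_herm hlin hpos hΛ.1) fun v => ?_
  set M : Matrix ι ι ℂ := fun a b => v a * star (v b) with hM
  have hMpsd : M.PosSemidef := by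
    refine Matrix.PosSemidef.of_dotProduct_mulVec_nonneg ?_ ?_
    · unfold Matrix.IsHermitian
      funext a b
      rw [Matrix.conjTranspose_apply, hM]
      simp [mul_comm]
    · intro w
      have : star w ⬝ᵥ (M *ᵥ w) =
          (∑ a, star (w a) * v a) * (∑ b, star (v b) * w b) := by
        simp only [dotProduct, Matrix.mulVec, hM, Pi.star_apply, Finset.mul_sum,
          Finset.sum_mul]
        rw [Finset.sum_comm]
        refine Finset.sum_congr rfl fun a _ => Finset.sum_congr rfl fun b _ => by ring
      rw [this]
      have hconj : (∑ a, star (w a) * v a) = star (∑ b, star (v b) * w b) := by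
        rw [star_sum]
        refine Finset.sum_congr rfl fun a _ => ?_
        simp [mul_comm]
      rw [hconj]
      exact star_mul_self_nonneg _
  have key : star v ⬝ᵥ ((adjMap P Λ) *ᵥ v) = ((adjMap P Λ) * M).trace := by
    simp only [dotProduct, Matrix.mulVec, Matrix.trace, Matrix.diag, Matrix.mul_apply,
      Pi.star_apply, Finset.mul_sum]
    exact Finset.sum_congr rfl fun i _ => Finset.sum_congr rfl fun j _ => by
      simp only [hM]; ring
  rw [key, adj_spec hlin]
  exact psd_mul_trace_nonneg' hΛ (hpos M hMpsd)

end AdjointAux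


section AdjointAux2

open Matrix

variable {ι κ : Type} [Fintype ι] [DecidableEq ι] [Fintype κ] [DecidableEq κ]
variable {P : Matrix ι ι ℂ → Matrix κ κ ℂ}

private lemma traceNorm_contract (hlin : IsLinearMap ℂ P)
    (hpos : ∀ X : Matrix ι ι ℂ, X.PosSemidef → (P X).PosSemidef)
    (htr : ∀ X : Matrix ι ι ℂ, (P X).trace = X.trace)
    {X : Matrix ι ι ℂ} (hX : X.IsHermitian) : traceNorm (P X) ≤ traceNorm X := by
  obtain ⟨Λ, h1, h2, hopt⟩ := exists_opt (P_herm hlin hpos hX)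
  rw [← hopt, ← adj_spec hlin]
  refine trace_le_traceNorm hX ?_ ?_
  · have h : (1 : Matrix ι ι ℂ) - adjMap P Λ = adjMap P (1 - Λ) := by
      rw [adj_sub, adj_one htr]
    rw [h]; exact adj_psd hlin hpos h1
  · have h : (1 : Matrix ι ι ℂ) + adjMap P Λ = adjMap P (1 + Λ) := by
      rw [adj_add, adj_one htr]
    rw [h]; exact adj_psd hlin hpos h2

end AdjointAux2

section HilbertSupAux

open Matrix

variable {n : Type} [Fintype n] [DecidableEq n]

/-- The feasible set in the definition of `hilbertSup`. -/
private def hset (α : ℝ) (ρ σ : Matrix n n ℂ) : Set ℝ :=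
  { t : ℝ | ∃ Λ : Matrix n n ℂ, Λ.IsHermitian ∧
    (Λ - (α⁻¹ : ℝ) • (1 : Matrix n n ℂ)).PosSemidef ∧
    ((1 : Matrix n n ℂ) - Λ).PosSemidef ∧
    t = ((Λ * ρ).trace).re / ((Λ * σ).trace).re }

private lemma hilbertSup_eq_hset (α : ℝ) (ρ σ : Matrix n n ℂ) :
    hilbertSup α ρ σ = sSup (hset α ρ σ) := rfl

private lemma tr_upper {τ Λ : Matrix n n ℂ} (hτ : IsDensity τ)
    (h : ((1 : Matrix n n ℂ) - Λ).PosSemidef) : ((Λ * τ).trace).re ≤ 1 := by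
  have h0 := psd_mul_trace_nonneg h hτ.1
  have e : (((1 : Matrix n n ℂ) - Λ) * τ).trace = τ.trace - (Λ * τ).trace := by
    rw [Matrix.sub_mul, Matrix.one_mul, Matrix.trace_sub]
  rw [e, hτ.2, Complex.sub_re, Complex.one_re] at h0
  linarith

private lemma tr_lower {α : ℝ} {τ Λ : Matrix n n ℂ} (hτ : IsDensity τ)
    (h : (Λ - (α⁻¹ : ℝ) • (1 : Matrix n n ℂ)).PosSemidef) :
    α⁻¹ ≤ ((Λ * τ).trace).re := by
  have h0 := psd_mul_trace_nonneg h hτ.1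
  have e : ((Λ - (α⁻¹ : ℝ) • (1 : Matrix n n ℂ)) * τ).trace
      = (Λ * τ).trace - (α⁻¹ : ℝ) • τ.trace := by
    rw [Matrix.sub_mul, Matrix.smul_mul, Matrix.one_mul, Matrix.trace_sub, Matrix.trace_smul]
  rw [e, hτ.2] at h0
  simp [Complex.sub_re, Complex.real_smul] at h0
  linarith

private lemma one_mem_hset {α : ℝ} (hα : 1 ≤ α) (ρ σ : Matrix n n ℂ)
    (hρ : IsDensity ρ) (hσ : IsDensity σ) : (1 : ℝ) ∈ hset α ρ σ := by
  refine ⟨1, Matrix.isHermitian_one, ?_, ?_, ?_⟩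
  · have e : (1 : Matrix n n ℂ) - (α⁻¹ : ℝ) • (1 : Matrix n n ℂ)
        = Matrix.diagonal (fun _ : n => ((1 - α⁻¹ : ℝ) : ℂ)) := by
      funext i j
      by_cases h : i = j <;>
        simp [h, Matrix.one_apply, Matrix.diagonal, Complex.real_smul, Matrix.sub_apply] <;>
        push_cast <;> ring
    rw [e]
    refine Matrix.PosSemidef.diagonal fun i => Complex.zero_le_real.mpr ?_
    have : α⁻¹ ≤ 1 := by
      rw [inv_le_one_iff₀]; right; exact hα
    linarith
  · rw [sub_self]
    exact Matrix.PosSemidef.zero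
  · rw [Matrix.one_mul, Matrix.one_mul, hρ.2, hσ.2]
    norm_num

private lemma hset_bddAbove {α : ℝ} (hα : 1 < α) (ρ σ : Matrix n n ℂ)
    (hρ : IsDensity ρ) (hσ : IsDensity σ) : BddAbove (hset α ρ σ) := by
  refine ⟨α, fun t ht => ?_⟩
  obtain ⟨Λ, hH, hlo, hhi, rfl⟩ := ht
  have hαpos : (0 : ℝ) < α⁻¹ := by positivity
  have ha : ((Λ * ρ).trace).re ≤ 1 := tr_upper hρ hhi
  have hb : α⁻¹ ≤ ((Λ * σ).trace).re := tr_lower hσ hlo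
  calc ((Λ * ρ).trace).re / ((Λ * σ).trace).re ≤ 1 / α⁻¹ := by
        apply div_le_div₀ (by norm_num) ha hαpos hb
    _ = α := by rw [one_div, inv_inv]

private lemma hset_le_mul {α : ℝ} (hα : 1 < α)
    {ι κ : Type} [Fintype ι] [DecidableEq ι] [Fintype κ] [DecidableEq κ]
    {P : Matrix ι ι ℂ → Matrix κ κ ℂ}
    (hlin : IsLinearMap ℂ P)
    (hpos : ∀ X : Matrix ι ι ℂ, X.PosSemidef → (P X).PosSemidef)
    (htr : ∀ X : Matrix ι ι ℂ, (P X).trace = X.trace)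
    (ρ σ : Matrix ι ι ℂ) (hρ : IsDensity ρ) (hσ : IsDensity σ)
    (ω : Matrix κ κ ℂ) (hω : IsDensity ω) :
    hilbertSup α (P ρ) ω ≤ hilbertSup α ρ σ * hilbertSup α (P σ) ω := by
  have hPρ : IsDensity (P ρ) := ⟨hpos ρ hρ.1, by rw [htr, hρ.2]⟩
  have hPσ : IsDensity (P σ) := ⟨hpos σ hσ.1, by rw [htr, hσ.2]⟩
  have hαinv : (0 : ℝ) < α⁻¹ := by positivity
  have hs1 : (1 : ℝ) ≤ hilbertSup α ρ σ := by
    rw [hilbertSup_eq_hset]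
    exact le_csSup (hset_bddAbove hα ρ σ hρ hσ) (one_mem_hset hα.le ρ σ hρ hσ)
  have hs2 : (1 : ℝ) ≤ hilbertSup α (P σ) ω := by
    rw [hilbertSup_eq_hset]
    exact le_csSup (hset_bddAbove hα _ _ hPσ hω) (one_mem_hset hα.le _ _ hPσ hω)
  rw [hilbertSup_eq_hset]
  apply csSup_le ⟨1, one_mem_hset hα.le _ _ hPρ hω⟩
  rintro t ⟨Λ, hH, hlo, hhi, rfl⟩
  set a := ((Λ * P ρ).trace).re with hadef
  set b := ((Λ * P σ).trace).re with hbdef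
  set d := ((Λ * ω).trace).re with hddef
  have hbpos : 0 < b := lt_of_lt_of_le hαinv (tr_lower hPσ hlo)
  have hdpos : 0 < d := lt_of_lt_of_le hαinv (tr_lower hω hlo)
  have hapos : 0 < a := lt_of_lt_of_le hαinv (tr_lower hPρ hlo)
  -- first factor via the adjoint map
  have hfac1 : a / b ∈ hset α ρ σ := by
    refine ⟨adjMap P Λ, adj_herm hlin hpos hH, ?_, ?_, ?_⟩
    · have h : adjMap P Λ - (α⁻¹ : ℝ) • (1 : Matrix ι ι ℂ)
          = adjMap P (Λ - (α⁻¹ : ℝ) • (1 : Matrix κ κ ℂ)) := by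
        rw [adj_sub, adj_real_smul, adj_one htr]
      rw [h]; exact adj_psd hlin hpos hlo
    · have h : (1 : Matrix ι ι ℂ) - adjMap P Λ = adjMap P (1 - Λ) := by
        rw [adj_sub, adj_one htr]
      rw [h]; exact adj_psd hlin hpos hhi
    · rw [adj_spec hlin, adj_spec hlin]
  have hfac2 : b / d ∈ hset α (P σ) ω := ⟨Λ, hH, hlo, hhi, rfl⟩
  have h1 : a / b ≤ hilbertSup α ρ σ := by
    rw [hilbertSup_eq_hset]
    exact le_csSup (hset_bddAbove hα ρ σ hρ hσ) hfac1
  have h2 : b / d ≤ hilbertSup α (P σ) ω := by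
    rw [hilbertSup_eq_hset]
    exact le_csSup (hset_bddAbove hα _ _ hPσ hω) hfac2
  have hsplit : a / d = (a / b) * (b / d) := by
    field_simp
  rw [hsplit]
  have h0ab : 0 ≤ a / b := le_of_lt (div_pos hapos hbpos)
  have h0bd : 0 ≤ b / d := le_of_lt (div_pos hbpos hdpos)
  exact mul_le_mul h1 h2 h0bd (le_trans zero_le_one hs1)

end HilbertSupAux

/-- Data-processed triangle inequality for the Hilbert `α`-divergence:
for a positive trace-preserving map `P` and `α ≥ 1`,
`H_α(P(ρ)‖ω) ≤ H_α(ρ‖σ) + H_α(P(σ)‖ω)`. -/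
theorem hilbertDiv_data_processed_triangle
    {ι κ : Type} [Fintype ι] [DecidableEq ι] [Fintype κ] [DecidableEq κ]
    (P : Matrix ι ι ℂ → Matrix κ κ ℂ)
    (hlin : IsLinearMap ℂ P)
    (hpos : ∀ X : Matrix ι ι ℂ, X.PosSemidef → (P X).PosSemidef)
    (htr : ∀ X : Matrix ι ι ℂ, (P X).trace = X.trace)
    (ρ σ : Matrix ι ι ℂ) (hρ : IsDensity ρ) (hσ : IsDensity σ)
    (ω : Matrix κ κ ℂ) (hω : IsDensity ω)
    (α : ℝ) (hα : 1 ≤ α) :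
    hilbertDiv α (P ρ) ω ≤ hilbertDiv α ρ σ + hilbertDiv α (P σ) ω := by
  by_cases hα1 : α = 1
  · -- trace-norm case
    simp only [hilbertDiv, if_pos hα1]
    have hc : (0 : ℝ) ≤ (2 * Real.log 2)⁻¹ := by
      have := Real.log_pos (by norm_num : (1 : ℝ) < 2)
      positivity
    have hρh : ρ.IsHermitian := hρ.1.1
    have hσh : σ.IsHermitian := hσ.1.1
    have hωh : ω.IsHermitian := hω.1.1
    have hPρh : (P ρ).IsHermitian := (hpos ρ hρ.1).1
    have hPσh : (P σ).IsHermitian := (hpos σ hσ.1).1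
    have key : traceNorm (P ρ - ω) ≤ traceNorm (ρ - σ) + traceNorm (P σ - ω) := by
      have e : P ρ - ω = (P ρ - P σ) + (P σ - ω) := by abel
      have tri : traceNorm (P ρ - ω) ≤ traceNorm (P ρ - P σ) + traceNorm (P σ - ω) := by
        rw [e]
        exact traceNorm_triangle_herm (hPρh.sub hPσh) (hPσh.sub hωh)
      have dp : traceNorm (P ρ - P σ) ≤ traceNorm (ρ - σ) := by
        rw [← hlin.map_sub]
        exact traceNorm_contract hlin hpos htr (hρh.sub hσh)
      linarith
    calc (2 * Real.log 2)⁻¹ * traceNorm (P ρ - ω)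
        ≤ (2 * Real.log 2)⁻¹ * (traceNorm (ρ - σ) + traceNorm (P σ - ω)) :=
          mul_le_mul_of_nonneg_left key hc
      _ = (2 * Real.log 2)⁻¹ * traceNorm (ρ - σ) +
          (2 * Real.log 2)⁻¹ * traceNorm (P σ - ω) := by ring
  · -- Hilbert projective case, α > 1
    have hαgt : 1 < α := lt_of_le_of_ne hα (Ne.symm hα1)
    simp only [hilbertDiv, if_neg hα1]
    have hPρ : IsDensity (P ρ) := ⟨hpos ρ hρ.1, by rw [htr, hρ.2]⟩
    have hPσ : IsDensity (P σ) := ⟨hpos σ hσ.1, by rw [htr, hσ.2]⟩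
    have hs1 : (1 : ℝ) ≤ hilbertSup α ρ σ := by
      rw [hilbertSup_eq_hset]
      exact le_csSup (hset_bddAbove hαgt ρ σ hρ hσ) (one_mem_hset hα ρ σ hρ hσ)
    have hs2 : (1 : ℝ) ≤ hilbertSup α (P σ) ω := by
      rw [hilbertSup_eq_hset]
      exact le_csSup (hset_bddAbove hαgt _ _ hPσ hω) (one_mem_hset hα _ _ hPσ hω)
    have hs0 : (1 : ℝ) ≤ hilbertSup α (P ρ) ω := by
      rw [hilbertSup_eq_hset]
      exact le_csSup (hset_bddAbove hαgt _ _ hPρ hω) (one_mem_hset hα _ _ hPρ hω)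
    have hkey : hilbertSup α (P ρ) ω ≤ hilbertSup α ρ σ * hilbertSup α (P σ) ω :=
      hset_le_mul hαgt hlin hpos htr ρ σ hρ hσ ω hω
    have hlog : Real.logb 2 (hilbertSup α (P ρ) ω)
        ≤ Real.logb 2 (hilbertSup α ρ σ) + Real.logb 2 (hilbertSup α (P σ) ω) := by
      have h1 : Real.logb 2 (hilbertSup α (P ρ) ω)
          ≤ Real.logb 2 (hilbertSup α ρ σ * hilbertSup α (P σ) ω) :=
        Real.logb_le_logb_of_le (by norm_num) (by linarith) hkey
      rwa [Real.logb_mul (by linarith) (by linarith)] at h1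
    have hcpos : (0 : ℝ) ≤ α / (α - 1) := by
      apply div_nonneg <;> linarith
    calc α / (α - 1) * Real.logb 2 (hilbertSup α (P ρ) ω)
        ≤ α / (α - 1) * (Real.logb 2 (hilbertSup α ρ σ) +
            Real.logb 2 (hilbertSup α (P σ) ω)) := mul_le_mul_of_nonneg_left hlog hcpos
      _ = α / (α - 1) * Real.logb 2 (hilbertSup α ρ σ) +
          α / (α - 1) * Real.logb 2 (hilbertSup α (P σ) ω) := by ring

end
end

section
/- Generalized Fuchs–van de Graaf inequality: for positive semidefinite complex matrices A and B of the same size, ‖A − B‖₁² + 4·‖A^{1/2} B^{1/2}‖₁² ≤ (Tr[A + B])², where ‖X‖₁ denotes the trace norm and A^{1/2}, B^{1/2} the positive semidefinite square roots. -/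
open scoped BigOperators ComplexOrder

noncomputable section

attribute [local instance] Classical.propDecidable

namespace FvdG

open Matrix

variable {ι : Type} [Fintype ι] [DecidableEq ι]

/-- The positive semidefinite square root (the former Mathlib definition). -/
noncomputable def _root_.Matrix.PosSemidef.sqrt {A : Matrix ι ι ℂ} (hA : A.PosSemidef) :
    Matrix ι ι ℂ :=
  hA.1.eigenvectorUnitary.1 * diagonal ((fun x : ℝ => (x : ℂ)) ∘ Real.sqrt ∘ hA.1.eigenvalues) *
    (star hA.1.eigenvectorUnitary : Matrix ι ι ℂ)

open scoped MatrixOrder in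
lemma _root_.Matrix.PosSemidef.sqrt_eq_cfc {A : Matrix ι ι ℂ} (hA : A.PosSemidef) :
    hA.sqrt = CFC.sqrt A := by
  rw [CFC.sqrt_eq_real_sqrt A hA.nonneg, cfcₙ_eq_cfc, hA.1.cfc_eq, Matrix.IsHermitian.cfc,
    Matrix.PosSemidef.sqrt]
  simp [Unitary.conjStarAlgAut_apply]

open scoped MatrixOrder in
lemma _root_.Matrix.PosSemidef.posSemidef_sqrt {A : Matrix ι ι ℂ} (hA : A.PosSemidef) :
    hA.sqrt.PosSemidef := by
  rw [hA.sqrt_eq_cfc]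
  exact (CFC.sqrt_nonneg A).posSemidef

open scoped MatrixOrder in
lemma _root_.Matrix.PosSemidef.sqrt_mul_self {A : Matrix ι ι ℂ} (hA : A.PosSemidef) :
    hA.sqrt * hA.sqrt = A := by
  rw [hA.sqrt_eq_cfc]
  exact CFC.sqrt_mul_sqrt_self A hA.nonneg

open scoped MatrixOrder in
lemma _root_.Matrix.PosSemidef.eq_sqrt_of_sq_eq {A : Matrix ι ι ℂ} (hA : A.PosSemidef)
    {B : Matrix ι ι ℂ} (hB : B.PosSemidef) (hAB : A ^ 2 = B) : A = hB.sqrt := by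
  rw [hB.sqrt_eq_cfc]
  exact (CFC.sqrt_unique (by rw [← hAB, pow_two]) hA.nonneg).symm

lemma matPow_half {A : Matrix ι ι ℂ} (hA : A.PosSemidef) :
    matPow A (1/2 : ℝ) = hA.sqrt := by
  rw [matPow, hermFun, dif_pos hA.1, Matrix.PosSemidef.sqrt]
  congr 2
  refine congrArg _ (funext fun i => ?_)
  by_cases h : hA.1.eigenvalues i = 0
  · simp [h, Function.comp]
  · simp only [h, if_false, Function.comp_apply]
    rw [Real.sqrt_eq_rpow]
    rfl

lemma traceNorm_eq (X : Matrix ι ι ℂ) :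
    traceNorm X = (((Matrix.posSemidef_conjTranspose_mul_self X).sqrt).trace).re := by
  rw [traceNorm, matPow_half (Matrix.posSemidef_conjTranspose_mul_self X)]


lemma psd_trace_re_nonneg {M : Matrix ι ι ℂ} (hM : M.PosSemidef) : 0 ≤ (M.trace).re := by
  have h : ∀ i, 0 ≤ (M i i).re := by
    intro i
    have h := hM.re_dotProduct_nonneg (Pi.single i 1)
    simpa [dotProduct, Matrix.mulVec, Pi.single_apply] using h
  rw [Matrix.trace, Complex.re_sum]
  exact Finset.sum_nonneg fun i _ => h i

lemma polar (Z : Matrix ι ι ℂ) :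
    ∃ W : Matrix ι ι ℂ,
      W * Z = (Matrix.posSemidef_conjTranspose_mul_self Z).sqrt ∧ W * Wᴴ * W = W := by
  have hz := Matrix.posSemidef_conjTranspose_mul_self Z
  set h : (Zᴴ * Z).IsHermitian := hz.1 with hh
  set V : Matrix ι ι ℂ := (h.eigenvectorUnitary : Matrix ι ι ℂ) with hV
  set lam : ι → ℝ := h.eigenvalues with hlam
  have hVV : V * star V = 1 := (Matrix.mem_unitaryGroup_iff).mp h.eigenvectorUnitary.2
  have hVV' : star V * V = 1 := (Matrix.mem_unitaryGroup_iff').mp h.eigenvectorUnitary.2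
  have hspec : Zᴴ * Z = V * Matrix.diagonal (fun i => ((lam i : ℝ) : ℂ)) * star V :=
    h.spectral_theorem
  set g : ι → ℝ := fun i => if lam i = 0 then 0 else (Real.sqrt (lam i))⁻¹ with hg
  set Dg : Matrix ι ι ℂ := Matrix.diagonal (fun i => ((g i : ℝ) : ℂ)) with hDg
  set Dl : Matrix ι ι ℂ := Matrix.diagonal (fun i => ((lam i : ℝ) : ℂ)) with hDl
  set W : Matrix ι ι ℂ := V * Dg * star V * Zᴴ with hW
  have key : ∀ i, ¬ lam i = 0 → (Real.sqrt (lam i))⁻¹ * lam i = Real.sqrt (lam i) := by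
    intro i hi
    have hpos : 0 < lam i := lt_of_le_of_ne (hz.eigenvalues_nonneg i) (Ne.symm hi)
    rw [inv_mul_eq_iff_eq_mul₀ (by positivity), Real.mul_self_sqrt hpos.le]
  have hgl : Dg * Dl = Matrix.diagonal (fun i => ((Real.sqrt (lam i) : ℝ) : ℂ)) := by
    rw [hDg, hDl, Matrix.diagonal_mul_diagonal]
    refine congrArg _ (funext fun i => ?_)
    by_cases hi : lam i = 0
    · simp [hg, hi]
    · simp only [hg, hi, if_false, ← Complex.ofReal_mul, key i hi]
  have hglg : Dg * Dl * Dg = Matrix.diagonal (fun i => (((if lam i = 0 then 0 else 1 : ℝ)) : ℂ)) := by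
    rw [hgl, hDg, Matrix.diagonal_mul_diagonal]
    refine congrArg _ (funext fun i => ?_)
    by_cases hi : lam i = 0
    · simp [hg, hi]
    · have hpos : 0 < lam i := lt_of_le_of_ne (hz.eigenvalues_nonneg i) (Ne.symm hi)
      have hs : Real.sqrt (lam i) ≠ 0 := by positivity
      simp only [hg, hi, if_false, ← Complex.ofReal_mul, ← Complex.ofReal_one]
      rw [mul_inv_cancel₀ hs]
  have heg : Matrix.diagonal (fun i => (((if lam i = 0 then 0 else 1 : ℝ)) : ℂ)) * Dg = Dg := by
    rw [hDg, Matrix.diagonal_mul_diagonal]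
    refine congrArg _ (funext fun i => ?_)
    by_cases hi : lam i = 0 <;> simp [hg, hi]
  have hcan : ∀ X : Matrix ι ι ℂ, star V * (V * X) = X := by
    intro X; rw [← Matrix.mul_assoc, hVV', Matrix.one_mul]
  have hWZ : W * Z = hz.sqrt := by
    rw [Matrix.PosSemidef.sqrt]
    calc W * Z = V * Dg * (star V * (V * Dl * star V)) := by
          rw [hW]
          simp only [Matrix.mul_assoc, ← hspec]
      _ = V * (Dg * Dl) * star V := by
          simp only [Matrix.mul_assoc, hcan]
      _ = _ := by rw [hgl]; rfl
  have hWH : Wᴴ = Z * (V * Dg * star V) := by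
    rw [hW, hDg]
    simp only [Matrix.conjTranspose_mul, Matrix.conjTranspose_conjTranspose,
      Matrix.star_eq_conjTranspose, Matrix.diagonal_conjTranspose]
    have : star (fun i => ((g i : ℝ) : ℂ)) = fun i => ((g i : ℝ) : ℂ) := by
      funext i; simp [Pi.star_apply, Complex.conj_ofReal]
    rw [this]
    simp only [Matrix.mul_assoc]
  have hWWH : W * Wᴴ = V * (Dg * Dl * Dg) * star V := by
    rw [hWH, hW]
    calc V * Dg * star V * Zᴴ * (Z * (V * Dg * star V))
        = V * Dg * (star V * (V * Dl * star V) * V) * Dg * star V := by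
          simp only [Matrix.mul_assoc, ← hspec]
      _ = _ := by
          simp only [Matrix.mul_assoc, hcan]
  refine ⟨W, hWZ, ?_⟩
  calc W * Wᴴ * W
      = V * ((Dg * Dl * Dg) * (star V * V) * Dg) * star V * Zᴴ := by
        rw [hWWH, hW]
        simp only [Matrix.mul_assoc]
    _ = W := by
        rw [hVV', Matrix.mul_one, hglg, heg, hW]

lemma contraction_of_tripotent {W : Matrix ι ι ℂ} (hW : W * Wᴴ * W = W) :
    (1 - W * Wᴴ).PosSemidef := by
  have hEH : (W * Wᴴ)ᴴ = W * Wᴴ := by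
    rw [Matrix.conjTranspose_mul, Matrix.conjTranspose_conjTranspose]
  have hEE : (W * Wᴴ) * (W * Wᴴ) = W * Wᴴ := by
    calc (W * Wᴴ) * (W * Wᴴ) = (W * Wᴴ * W) * Wᴴ := by simp only [Matrix.mul_assoc]
      _ = W * Wᴴ := by rw [hW]
  have h1 : (1 - W * Wᴴ)ᴴ * (1 - W * Wᴴ) = 1 - W * Wᴴ := by
    rw [Matrix.conjTranspose_sub, Matrix.conjTranspose_one, hEH, Matrix.sub_mul,
      Matrix.one_mul, Matrix.mul_sub, Matrix.mul_one, hEE, sub_self, sub_zero]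
  have := Matrix.posSemidef_conjTranspose_mul_self (1 - W * Wᴴ)
  rwa [h1] at this

lemma trace_conjTranspose_mul (U V : Matrix ι ι ℂ) :
    (Uᴴ * V).trace = ∑ p : ι × ι, (starRingEnd ℂ) (U p.1 p.2) * V p.1 p.2 := by
  rw [Matrix.trace, Fintype.sum_prod_type]
  simp only [Matrix.diag_apply, Matrix.mul_apply, Matrix.conjTranspose_apply]
  exact Finset.sum_comm

lemma trace_conjTranspose_mul_self_re (U : Matrix ι ι ℂ) :
    ((Uᴴ * U).trace).re = ∑ p : ι × ι, ‖U p.1 p.2‖ ^ 2 := by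
  rw [trace_conjTranspose_mul, Complex.re_sum]
  refine Finset.sum_congr rfl fun p _ => ?_
  rw [mul_comm, Complex.mul_conj, Complex.ofReal_re, Complex.normSq_eq_norm_sq]

lemma frob_cs (X Y : Matrix ι ι ℂ) :
    ((Xᴴ * Y).trace).re ≤
      Real.sqrt ((Xᴴ * X).trace).re * Real.sqrt ((Yᴴ * Y).trace).re := by
  set x : EuclideanSpace ℂ (ι × ι) := WithLp.toLp 2 (fun p : ι × ι => X p.1 p.2) with hx
  set y : EuclideanSpace ℂ (ι × ι) := WithLp.toLp 2 (fun p : ι × ι => Y p.1 p.2) with hy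
  have hinner : (Xᴴ * Y).trace = @inner ℂ _ _ x y := by
    rw [trace_conjTranspose_mul, PiLp.inner_apply]
    exact Finset.sum_congr rfl fun p _ => (RCLike.inner_apply' (X p.1 p.2) (Y p.1 p.2)).symm
  have hnx : Real.sqrt ((Xᴴ * X).trace).re = ‖x‖ := by
    rw [trace_conjTranspose_mul_self_re, EuclideanSpace.norm_eq]
  have hny : Real.sqrt ((Yᴴ * Y).trace).re = ‖y‖ := by
    rw [trace_conjTranspose_mul_self_re, EuclideanSpace.norm_eq]
  rw [hinner, hnx, hny]
  calc (@inner ℂ _ _ x y).re ≤ ‖@inner ℂ _ _ x y‖ := Complex.re_le_norm _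
    _ ≤ ‖x‖ * ‖y‖ := norm_inner_le_norm x y

lemma key_bound {W : Matrix ι ι ℂ} (hW : (1 - W * Wᴴ).PosSemidef) (X Y : Matrix ι ι ℂ) :
    ((W * (X * Yᴴ)).trace).re ≤
      Real.sqrt ((Xᴴ * X).trace).re * Real.sqrt ((Yᴴ * Y).trace).re := by
  have h1 : (W * (X * Yᴴ)).trace = ((Wᴴ * Y)ᴴ * X).trace := by
    rw [← Matrix.mul_assoc, Matrix.trace_mul_comm, Matrix.conjTranspose_mul,
      Matrix.conjTranspose_conjTranspose, Matrix.mul_assoc]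
  have h2 := frob_cs (Wᴴ * Y) X
  have h3 : (((Wᴴ * Y)ᴴ * (Wᴴ * Y)).trace).re ≤ ((Yᴴ * Y).trace).re := by
    have hpsd := hW.conjTranspose_mul_mul_same Y
    have htr := psd_trace_re_nonneg hpsd
    have hexp : Yᴴ * (1 - W * Wᴴ) * Y = Yᴴ * Y - (Wᴴ * Y)ᴴ * (Wᴴ * Y) := by
      rw [Matrix.conjTranspose_mul, Matrix.conjTranspose_conjTranspose, Matrix.mul_sub,
        Matrix.mul_one, Matrix.sub_mul]
      simp only [Matrix.mul_assoc]
    rw [hexp, Matrix.trace_sub, Complex.sub_re] at htr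
    linarith
  have h4 : Real.sqrt (((Wᴴ * Y)ᴴ * (Wᴴ * Y)).trace).re ≤ Real.sqrt ((Yᴴ * Y).trace).re :=
    Real.sqrt_le_sqrt h3
  calc ((W * (X * Yᴴ)).trace).re = (((Wᴴ * Y)ᴴ * X).trace).re := by rw [h1]
    _ ≤ Real.sqrt (((Wᴴ * Y)ᴴ * (Wᴴ * Y)).trace).re * Real.sqrt ((Xᴴ * X).trace).re := h2
    _ ≤ Real.sqrt ((Yᴴ * Y).trace).re * Real.sqrt ((Xᴴ * X).trace).re := by
        have := Real.sqrt_nonneg ((Xᴴ * X).trace).re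
        nlinarith [Real.sqrt_nonneg (((Wᴴ * Y)ᴴ * (Wᴴ * Y)).trace).re]
    _ = _ := mul_comm _ _

def emb (X : Matrix ι ι ℂ) : Matrix (ι ⊕ ι) (ι ⊕ ι) ℂ := Matrix.fromBlocks X 0 0 0

lemma emb_mul (X Y : Matrix ι ι ℂ) : emb X * emb Y = emb (X * Y) := by
  rw [emb, emb, emb, Matrix.fromBlocks_multiply]
  simp

lemma emb_conjT (X : Matrix ι ι ℂ) : (emb X)ᴴ = emb Xᴴ := by
  rw [emb, emb, Matrix.fromBlocks_conjTranspose]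
  simp

lemma emb_sub (X Y : Matrix ι ι ℂ) : emb X - emb Y = emb (X - Y) := by
  ext p q
  cases p <;> cases q <;> simp [emb, Matrix.fromBlocks, Matrix.sub_apply]

lemma trace_fromBlocks (A' : Matrix ι ι ℂ) (B' : Matrix ι ι ℂ) (C' : Matrix ι ι ℂ)
    (D' : Matrix ι ι ℂ) :
    (Matrix.fromBlocks A' B' C' D').trace = A'.trace + D'.trace := by
  rw [Matrix.trace, Matrix.trace, Matrix.trace, Fintype.sum_sum_type]
  rfl

lemma trace_emb (X : Matrix ι ι ℂ) : (emb X).trace = X.trace := by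
  rw [emb, trace_fromBlocks, Matrix.trace_zero, add_zero]

lemma emb_psd {X : Matrix ι ι ℂ} (hX : X.PosSemidef) : (emb X).PosSemidef := by
  have h1 : emb hX.sqrt * emb hX.sqrt = emb X := by rw [emb_mul, hX.sqrt_mul_self]
  have h2 : (emb hX.sqrt)ᴴ = emb hX.sqrt := by rw [emb_conjT, hX.posSemidef_sqrt.1]
  have := Matrix.posSemidef_conjTranspose_mul_self (emb hX.sqrt)
  rwa [h2, h1] at this

lemma emb_sqrt {M : Matrix ι ι ℂ} (hM : M.PosSemidef) :
    (emb_psd hM).sqrt = emb hM.sqrt := by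
  symm
  exact (emb_psd hM.posSemidef_sqrt).eq_sqrt_of_sq_eq (emb_psd hM)
    (by rw [pow_two, emb_mul, hM.sqrt_mul_self])

lemma sqrt_congr {M N : Matrix ι ι ℂ} (hM : M.PosSemidef) (hN : N.PosSemidef)
    (h : M = N) : hM.sqrt = hN.sqrt := by
  subst h
  rfl

lemma traceNorm_emb (X : Matrix ι ι ℂ) : traceNorm (emb X) = traceNorm X := by
  rw [traceNorm_eq, traceNorm_eq]
  have h1 : (emb X)ᴴ * emb X = emb (Xᴴ * X) := by rw [emb_conjT, emb_mul]
  have h2 := sqrt_congr (Matrix.posSemidef_conjTranspose_mul_self (emb X))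
    (emb_psd (Matrix.posSemidef_conjTranspose_mul_self X)) h1
  rw [h2, emb_sqrt, trace_emb]

lemma unit_completion {W : Matrix ι ι ℂ} (hW : W * Wᴴ * W = W) :
    (Matrix.fromBlocks W (1 - W * Wᴴ) (1 - Wᴴ * W) (-Wᴴ))ᴴ *
      (Matrix.fromBlocks W (1 - W * Wᴴ) (1 - Wᴴ * W) (-Wᴴ)) = 1 := by
  have hW' : Wᴴ * W * Wᴴ = Wᴴ := by
    calc Wᴴ * W * Wᴴ = (W * Wᴴ * W)ᴴ := by
          simp only [Matrix.conjTranspose_mul, Matrix.conjTranspose_conjTranspose,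
            Matrix.mul_assoc]
      _ = Wᴴ := by rw [hW]
  have e1 : (1 - W * Wᴴ)ᴴ = 1 - W * Wᴴ := by
    simp [Matrix.conjTranspose_sub, Matrix.conjTranspose_mul]
  have e2 : (1 - Wᴴ * W)ᴴ = 1 - Wᴴ * W := by
    simp [Matrix.conjTranspose_sub, Matrix.conjTranspose_mul]
  have e3 : (-Wᴴ)ᴴ = -W := by simp
  have h11 : Wᴴ * W + (1 - Wᴴ * W) * (1 - Wᴴ * W) = 1 := by
    simp only [Matrix.mul_sub, Matrix.sub_mul, Matrix.mul_one, Matrix.one_mul,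
      ← Matrix.mul_assoc, hW, hW']
    abel
  have h12 : Wᴴ * (1 - W * Wᴴ) + (1 - Wᴴ * W) * (-Wᴴ) = 0 := by
    simp only [Matrix.mul_sub, Matrix.sub_mul, Matrix.mul_one, Matrix.one_mul,
      Matrix.mul_neg, Matrix.neg_mul, neg_sub, ← Matrix.mul_assoc, hW, hW']
    abel
  have h21 : (1 - W * Wᴴ) * W + (-W) * (1 - Wᴴ * W) = 0 := by
    simp only [Matrix.mul_sub, Matrix.sub_mul, Matrix.mul_one, Matrix.one_mul,
      Matrix.mul_neg, Matrix.neg_mul, neg_sub, ← Matrix.mul_assoc, hW, hW']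
    abel
  have h22 : (1 - W * Wᴴ) * (1 - W * Wᴴ) + (-W) * (-Wᴴ) = 1 := by
    simp only [Matrix.mul_sub, Matrix.sub_mul, Matrix.mul_one, Matrix.one_mul,
      Matrix.mul_neg, Matrix.neg_mul, neg_neg, ← Matrix.mul_assoc, hW, hW']
    abel
  rw [Matrix.fromBlocks_conjTranspose, e1, e2, e3, Matrix.fromBlocks_multiply,
    h11, h12, h21, h22, Matrix.fromBlocks_one]

end FvdG

open Matrix in
/-- Generalized Fuchs–van de Graaf inequality: for positive semidefinite
matrices `A`, `B`, `‖A − B‖₁² + 4 ‖A^{1/2} B^{1/2}‖₁² ≤ (Tr[A + B])²`. -/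
theorem generalized_fuchs_van_de_graaf
    {ι : Type} [Fintype ι] [DecidableEq ι]
    (A B : Matrix ι ι ℂ) (hA : A.PosSemidef) (hB : B.PosSemidef) :
    traceNorm (A - B) ^ 2 +
        4 * traceNorm (matPow A (1/2 : ℝ) * matPow B (1/2 : ℝ)) ^ 2 ≤
      (((A + B).trace).re) ^ 2 := by
  rw [FvdG.matPow_half hA, FvdG.matPow_half hB]
  set P := hA.sqrt with hPdef
  set Q := hB.sqrt with hQdef
  set Z := P * Q with hZdef
  set a := (A.trace).re with hadef
  set b := (B.trace).re with hbdef
  set f := traceNorm Z with hfdef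
  obtain ⟨W, hWZ, hWt⟩ := FvdG.polar Z
  set U := Matrix.fromBlocks W (1 - W * Wᴴ) (1 - Wᴴ * W) (-Wᴴ) with hUdef
  have hU : Uᴴ * U = 1 := FvdG.unit_completion hWt
  set Pt := FvdG.emb P with hPtdef
  set Qt := FvdG.emb Q with hQtdef
  set R := Pt * Uᴴ with hRdef
  have hPH : Pᴴ = P := hA.posSemidef_sqrt.1
  have hQH : Qᴴ = Q := hB.posSemidef_sqrt.1
  have hPtH : Ptᴴ = Pt := by rw [hPtdef, FvdG.emb_conjT, hPH]
  have hQtH : Qtᴴ = Qt := by rw [hQtdef, FvdG.emb_conjT, hQH]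
  have hRRH : R * Rᴴ = FvdG.emb A := by
    rw [hRdef, Matrix.conjTranspose_mul, Matrix.conjTranspose_conjTranspose]
    calc Pt * Uᴴ * (U * Ptᴴ) = Pt * (Uᴴ * U) * Ptᴴ := by simp only [Matrix.mul_assoc]
      _ = Pt * Pt := by rw [hU, Matrix.mul_one, hPtH]
      _ = FvdG.emb A := by rw [hPtdef, FvdG.emb_mul, hPdef, hA.sqrt_mul_self]
  have hQQH : Qt * Qt = FvdG.emb B := by
    rw [hQtdef, FvdG.emb_mul, hQdef, hB.sqrt_mul_self]
  have hcross : ((Rᴴ * Qt).trace).re = f := by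
    rw [hRdef, Matrix.conjTranspose_mul, Matrix.conjTranspose_conjTranspose, hPtH]
    have hblock : U * (Pt * Qt) =
        Matrix.fromBlocks (W * Z) 0 ((1 - Wᴴ * W) * Z) 0 := by
      rw [hPtdef, hQtdef, FvdG.emb_mul, ← hZdef, hUdef, FvdG.emb, Matrix.fromBlocks_multiply]
      simp
    rw [Matrix.mul_assoc, hblock, FvdG.trace_fromBlocks, Matrix.trace_zero, add_zero, hWZ,
      hfdef, FvdG.traceNorm_eq]
  set M := FvdG.emb (A - B) with hMdef
  have hMRQ : M = R * Rᴴ - Qt * Qtᴴ := by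
    rw [hRRH, hQtH, hQQH, FvdG.emb_sub, hMdef]
  obtain ⟨W₀, hW0M, hW0t⟩ := FvdG.polar M
  have hcontr := FvdG.contraction_of_tripotent hW0t
  have ht : traceNorm (A - B) = ((W₀ * M).trace).re := by
    rw [hW0M, ← FvdG.traceNorm_emb (A - B), ← hMdef, FvdG.traceNorm_eq]
  have htn : 0 ≤ traceNorm (A - B) := by
    rw [← FvdG.traceNorm_emb (A - B), ← hMdef, FvdG.traceNorm_eq]
    exact FvdG.psd_trace_re_nonneg (Matrix.posSemidef_conjTranspose_mul_self M).posSemidef_sqrt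
  have hfn : 0 ≤ f := by
    rw [hfdef, FvdG.traceNorm_eq]
    exact FvdG.psd_trace_re_nonneg (Matrix.posSemidef_conjTranspose_mul_self Z).posSemidef_sqrt
  set X1 := R - Qt with hX1def
  set Y1 := R + Qt with hY1def
  have hMM : M + M = X1 * Y1ᴴ + Y1 * X1ᴴ := by
    rw [hMRQ, hX1def, hY1def]
    simp only [Matrix.conjTranspose_add, Matrix.conjTranspose_sub, Matrix.sub_mul,
      Matrix.add_mul, Matrix.mul_add, Matrix.mul_sub]
    abel
  have hdecomp : ((W₀ * M).trace).re + ((W₀ * M).trace).re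
      = ((W₀ * (X1 * Y1ᴴ)).trace).re + ((W₀ * (Y1 * X1ᴴ)).trace).re := by
    have : (W₀ * (M + M)).trace = (W₀ * (X1 * Y1ᴴ)).trace + (W₀ * (Y1 * X1ᴴ)).trace := by
      rw [hMM, Matrix.mul_add, Matrix.trace_add]
    rw [Matrix.mul_add, Matrix.trace_add] at this
    have := congrArg Complex.re this
    simpa [Complex.add_re] using this
  -- trace computations
  have htrR : ((Rᴴ * R).trace).re = a := by
    rw [Matrix.trace_mul_comm, hRRH, FvdG.trace_emb]
  have htrQ : ((Qtᴴ * Qt).trace).re = b := by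
    rw [hQtH, hQQH, FvdG.trace_emb]
  have htrQR : ((Qtᴴ * R).trace).re = f := by
    have : Qtᴴ * R = (Rᴴ * Qt)ᴴ := by
      rw [Matrix.conjTranspose_mul, Matrix.conjTranspose_conjTranspose]
    rw [this, Matrix.trace_conjTranspose]
    simpa [Complex.conj_re] using hcross
  have hX1tr : ((X1ᴴ * X1).trace).re = a + b - 2 * f := by
    rw [hX1def, Matrix.conjTranspose_sub, Matrix.sub_mul, Matrix.mul_sub, Matrix.mul_sub,
      Matrix.trace_sub, Matrix.trace_sub, Matrix.trace_sub]
    simp only [Complex.sub_re]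
    linarith [hcross, htrQR, htrR, htrQ]
  have hY1tr : ((Y1ᴴ * Y1).trace).re = a + b + 2 * f := by
    rw [hY1def, Matrix.conjTranspose_add, Matrix.add_mul, Matrix.mul_add, Matrix.mul_add,
      Matrix.trace_add, Matrix.trace_add, Matrix.trace_add]
    simp only [Complex.add_re]
    linarith [hcross, htrQR, htrR, htrQ]
  have hn1 : 0 ≤ a + b - 2 * f := by
    rw [← hX1tr]
    exact FvdG.psd_trace_re_nonneg (Matrix.posSemidef_conjTranspose_mul_self X1)
  have hn2 : 0 ≤ a + b + 2 * f := by
    rw [← hY1tr]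
    exact FvdG.psd_trace_re_nonneg (Matrix.posSemidef_conjTranspose_mul_self Y1)
  have kb1 := FvdG.key_bound hcontr X1 Y1
  have kb2 := FvdG.key_bound hcontr Y1 X1
  rw [hX1tr, hY1tr] at kb1 kb2
  have hle : traceNorm (A - B) ≤
      Real.sqrt (a + b - 2 * f) * Real.sqrt (a + b + 2 * f) := by
    rw [ht]
    have := hdecomp
    nlinarith [kb1, kb2]
  have hsq : traceNorm (A - B) ^ 2 ≤ (a + b - 2 * f) * (a + b + 2 * f) := by
    have h1 : traceNorm (A - B) ^ 2 ≤
        (Real.sqrt (a + b - 2 * f) * Real.sqrt (a + b + 2 * f)) ^ 2 :=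
      pow_le_pow_left₀ htn hle 2
    have h2 : (Real.sqrt (a + b - 2 * f) * Real.sqrt (a + b + 2 * f)) ^ 2
        = (a + b - 2 * f) * (a + b + 2 * f) := by
      rw [mul_pow, Real.sq_sqrt hn1, Real.sq_sqrt hn2]
    linarith
  have hab : ((A + B).trace).re = a + b := by
    rw [Matrix.trace_add, Complex.add_re]
  rw [hab]
  nlinarith [hsq, hfn]


end
end
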